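/- Let Γ ⊆ ℝ be an additive subgroup and ℤ[Γ] its group ring, viewed as the subring of the Novikov ring Nov(Γ) consisting of finitely supported elements. Let S ⊆ ℤ[Γ] be the multiplicative set of elements whose term of maximal exponent has coefficient 1. Then every element of S is invertible in Nov(Γ), and hence the localization S⁻¹ℤ[Γ] embeds as a subring of Nov(Γ). -/

import Mathlib

/-- The underlying set of the Novikov ring `Nov(Γ)` of an additive subgroup `Γ ⊆ ℝ`:
functions `Γ → ℤ` whose support meets each interval `[c, ∞)` in a finite set. -/
def Nov (Γ : AddSubgroup ℝ) : Type :=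
  {x : Γ → ℤ // ∀ c : ℝ, {γ : Γ | x γ ≠ 0 ∧ c ≤ (γ : ℝ)}.Finite}

section aux
set_option linter.unusedSectionVars false
set_option maxHeartbeats 1000000
variable {Γ : AddSubgroup ℝ} [CommRing (Nov Γ)]

lemma Nov.ext {x y : Nov Γ} (h : x.val = y.val) : x = y := Subtype.ext h

lemma coeff_mul (a q : AddMonoidAlgebra ℤ Γ) (γ : Γ) :
    (a * q).coeff γ = ∑ b ∈ a.coeff.support, a.coeff b * q.coeff (γ - b) := by
  classical
  rw [AddMonoidAlgebra.coeff_mul, Finsupp.sum]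
  refine Finset.sum_congr rfl fun b _ => ?_
  rw [Finsupp.sum]
  have h1 : ∀ c : Γ, (if b + c = γ then a.coeff b * q.coeff c else 0)
      = (if c = γ - b then a.coeff b * q.coeff c else 0) := by
    intro c
    congr 1
    simp [eq_sub_iff_add_eq, add_comm]
  simp only [h1]
  rw [Finset.sum_ite_eq' q.coeff.support (γ - b) (fun c => a.coeff b * q.coeff c)]
  split
  · rfl
  · next h => rw [Finsupp.notMem_support_iff.1 h, mul_zero]

variable (ι : AddMonoidAlgebra ℤ Γ →+* Nov Γ)
    (hι : ∀ (p : AddMonoidAlgebra ℤ Γ) (γ : Γ), (ι p).val γ = p.coeff γ)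
    (hadd : ∀ x y : Nov Γ, (x + y).val = fun γ => x.val γ + y.val γ)
    (hmul : ∀ x y : Nov Γ, ∀ γ : Γ,
      (x * y).val γ = ∑ᶠ p : Γ × Γ, if p.1 + p.2 = γ then x.val p.1 * y.val p.2 else 0)

include hι in
lemma Nov.zero_val (γ : Γ) : (0 : Nov Γ).val γ = 0 := by
  have := hι 0 γ
  rwa [map_zero, AddMonoidAlgebra.coeff_zero, Finsupp.coe_zero, Pi.zero_apply] at this

include hι in
lemma Nov.one_val (γ : Γ) : (1 : Nov Γ).val γ = if γ = 0 then 1 else 0 := by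
  have := hι 1 γ
  rw [map_one] at this
  rw [this, AddMonoidAlgebra.one_def, AddMonoidAlgebra.coeff_single, Finsupp.single_apply]
  simp [eq_comm]

include hι hadd in
lemma Nov.neg_val (x : Nov Γ) (γ : Γ) : (-x).val γ = -(x.val γ) := by
  have h := congrFun (hadd x (-x)) γ
  rw [add_neg_cancel, Nov.zero_val ι hι] at h
  omega

include hι hadd in
lemma Nov.sub_val (x y : Nov Γ) (γ : Γ) : (x - y).val γ = x.val γ - y.val γ := by
  rw [sub_eq_add_neg, congrFun (hadd x (-y)) γ, Nov.neg_val ι hι hadd]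
  omega

include hι hmul in
lemma mul_iota_val (a : AddMonoidAlgebra ℤ Γ) (x : Nov Γ) (γ : Γ) :
    (ι a * x).val γ = ∑ b ∈ a.coeff.support, a.coeff b * x.val (γ - b) := by
  classical
  rw [hmul]
  have hsupp : (Function.support fun p : Γ × Γ =>
      if p.1 + p.2 = γ then (ι a).val p.1 * x.val p.2 else 0)
      ⊆ ↑(a.coeff.support.image fun b => (b, γ - b)) := by
    intro p hp
    simp only [Function.mem_support, ne_eq, ite_eq_right_iff, not_forall] at hp
    obtain ⟨h1, h2⟩ := hp
    have ha : a.coeff p.1 ≠ 0 := by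
      intro h0
      apply h2
      rw [hι, h0, zero_mul]
    simp only [Finset.coe_image, Set.mem_image, Finset.mem_coe, Finsupp.mem_support_iff]
    exact ⟨p.1, ha, by rw [← h1]; simp⟩
  rw [finsum_eq_finset_sum_of_support_subset _ hsupp,
    Finset.sum_image (by intro b _ c _ h; exact (Prod.mk.injEq _ _ _ _ ▸ h).1)]
  refine Finset.sum_congr rfl fun b _ => ?_
  rw [if_pos (by rw [add_comm, sub_add_cancel]), hι]

include hι hadd hmul in
lemma isUnit_one_sub_iota (u : AddMonoidAlgebra ℤ Γ)
    (hu : ∀ γ ∈ u.coeff.support, (γ : ℝ) < 0) : IsUnit ((1 : Nov Γ) - ι u) := by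
  classical
  by_cases hne : u.coeff.support.Nonempty
  swap
  · rw [Finset.not_nonempty_iff_eq_empty, Finsupp.support_eq_empty, AddMonoidAlgebra.coeff_eq_zero] at hne
    rw [hne, map_zero, sub_zero]
    exact isUnit_one
  -- a uniform gap ε
  obtain ⟨ε, hε, hgap⟩ : ∃ ε : ℝ, 0 < ε ∧ ∀ γ ∈ u.coeff.support, (γ : ℝ) ≤ -ε := by
    have hne' : (u.coeff.support.image fun γ : Γ => (γ : ℝ)).Nonempty := hne.image _
    set m := (u.coeff.support.image fun γ : Γ => (γ : ℝ)).max' hne' with hm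
    obtain ⟨γm, hγm, hγm'⟩ := Finset.mem_image.1 ((u.coeff.support.image _).max'_mem hne')
    refine ⟨-m, ?_, ?_⟩
    · have h := hu γm hγm
      rw [hγm'] at h
      linarith
    · intro γ hγ
      rw [neg_neg]
      exact Finset.le_max' _ _ (Finset.mem_image_of_mem _ hγ)
  -- bound on powers
  have hpow : ∀ n : ℕ, ∀ γ : Γ, (u ^ n).coeff γ ≠ 0 → (γ : ℝ) ≤ -(n * ε) := by
    intro n
    induction n with
    | zero =>
      intro γ h
      rw [pow_zero, AddMonoidAlgebra.one_def, AddMonoidAlgebra.coeff_single, Finsupp.single_apply] at h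
      have h0 : (0 : Γ) = γ := by by_contra hne0; rw [if_neg hne0] at h; exact h rfl
      rw [← h0]
      simp
    | succ n ih =>
      intro γ h
      have hγ : γ ∈ (u ^ n * u).coeff.support := by
        rw [← pow_succ]; exact Finsupp.mem_support_iff.2 h
      have hsub := AddMonoidAlgebra.support_coeff_mul_subset (u ^ n) u hγ
      rw [Finset.mem_add] at hsub
      obtain ⟨a, ha, b, hb, hab⟩ := hsub
      have h1 : (a : ℝ) ≤ -(n * ε) := ih a (Finsupp.mem_support_iff.1 ha)
      have h2 : (b : ℝ) ≤ -ε := hgap b hb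
      have h3 : (γ : ℝ) = (a : ℝ) + (b : ℝ) := by rw [← hab]; push_cast; ring
      rw [h3]
      push_cast
      nlinarith
  -- the geometric series
  set v : Γ → ℤ := fun γ => ∑ᶠ n : ℕ, (u ^ n).coeff γ with hv
  have hfin : ∀ γ : Γ, (Function.support fun n : ℕ => (u ^ n).coeff γ) ⊆ ↑(Finset.range (⌈(-(γ : ℝ)) / ε⌉₊ + 1)) := by
    intro γ n hn
    simp only [Finset.coe_range, Set.mem_Iio]
    have h1 := hpow n γ hn
    have h2 : (n : ℝ) ≤ (-(γ : ℝ)) / ε := by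
      rw [le_div_iff₀ hε]
      linarith
    have h3 : (n : ℝ) ≤ (⌈(-(γ : ℝ)) / ε⌉₊ : ℝ) := h2.trans (Nat.le_ceil _)
    exact Nat.lt_succ_of_le (by exact_mod_cast h3)
  have hvmem : ∀ c : ℝ, {γ : Γ | v γ ≠ 0 ∧ c ≤ (γ : ℝ)}.Finite := by
    intro c
    apply Set.Finite.subset
      (((Finset.range (⌈(-c) / ε⌉₊ + 1)).biUnion fun n => (u ^ n).coeff.support).finite_toSet)
    rintro γ ⟨h1, h2⟩
    have hex : ∃ n, (u ^ n).coeff γ ≠ 0 := by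
      by_contra hall
      push_neg at hall
      exact h1 (finsum_eq_zero_of_forall_eq_zero hall)
    obtain ⟨n, hn⟩ := hex
    have hb := hpow n γ hn
    have hcn : (n : ℝ) ≤ (-c) / ε := by rw [le_div_iff₀ hε]; linarith
    have hnN : (n : ℝ) ≤ (⌈(-c) / ε⌉₊ : ℝ) := hcn.trans (Nat.le_ceil _)
    simp only [Finset.coe_biUnion, Set.mem_iUnion, Finset.mem_coe, Finset.mem_biUnion]
    exact ⟨n, Finset.mem_range.2 (Nat.lt_succ_of_le (by exact_mod_cast hnN)),
      Finsupp.mem_support_iff.2 hn⟩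
  set w : Nov Γ := ⟨v, hvmem⟩ with hw
  have hwval : ∀ γ : Γ, w.val γ = v γ := fun γ => rfl
  have hrec : ∀ γ : Γ, (ι u * w).val γ = v γ - (1 : Nov Γ).val γ := by
    intro γ
    rw [mul_iota_val ι hι hmul]
    set D : Finset Γ := insert γ (u.coeff.support.image fun b => γ - b) with hD
    set N : ℕ := D.sup (fun δ => ⌈(-(δ : ℝ)) / ε⌉₊ + 1) with hN
    have hDsub : ∀ δ ∈ D, (Function.support fun n : ℕ => (u ^ n).coeff δ) ⊆ ↑(Finset.range N) := by
      intro δ hδ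
      refine (hfin δ).trans ?_
      exact Finset.coe_subset.2 (Finset.range_subset_range.2 (Finset.le_sup (f := fun δ : Γ => ⌈(-(δ : ℝ)) / ε⌉₊ + 1) hδ))
    have hvδ : ∀ δ ∈ D, v δ = ∑ n ∈ Finset.range N, (u ^ n).coeff δ := fun δ hδ =>
      finsum_eq_finset_sum_of_support_subset _ (hDsub δ hδ)
    calc ∑ b ∈ u.coeff.support, u.coeff b * w.val (γ - b)
        = ∑ b ∈ u.coeff.support, u.coeff b * ∑ n ∈ Finset.range N, (u ^ n).coeff (γ - b) := by
          refine Finset.sum_congr rfl fun b hb => ?_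
          rw [hwval, hvδ _ (Finset.mem_insert_of_mem (Finset.mem_image_of_mem _ hb))]
      _ = ∑ n ∈ Finset.range N, ∑ b ∈ u.coeff.support, u.coeff b * (u ^ n).coeff (γ - b) := by
          simp_rw [Finset.mul_sum]
          exact Finset.sum_comm
      _ = ∑ n ∈ Finset.range N, (u ^ (n + 1)).coeff γ := by
          refine Finset.sum_congr rfl fun n _ => ?_
          rw [pow_succ', coeff_mul]
      _ = ∑ n ∈ Finset.range (N + 1), (u ^ n).coeff γ - (u ^ 0).coeff γ := by
          rw [Finset.sum_range_succ']
          ring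
      _ = v γ - (1 : Nov Γ).val γ := by
          have h1 : v γ = ∑ n ∈ Finset.range (N + 1), (u ^ n).coeff γ := by
            apply finsum_eq_finset_sum_of_support_subset
            refine (hDsub γ (Finset.mem_insert_self _ _)).trans ?_
            exact Finset.coe_subset.2 (Finset.range_subset_range.2 (Nat.le_succ N))
          rw [← h1, Nov.one_val ι hι]
          congr 1
          rw [pow_zero, AddMonoidAlgebra.one_def, AddMonoidAlgebra.coeff_single, Finsupp.single_apply]
          simp [eq_comm]
  have hfinal : ((1 : Nov Γ) - ι u) * w = 1 := by
    apply Nov.ext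
    funext γ
    have e1 : ((1 : Nov Γ) - ι u) * w = w - ι u * w := by ring
    rw [e1, Nov.sub_val ι hι hadd, hrec γ, hwval]
    omega
  exact IsUnit.of_mul_eq_one _ hfinal

include hι hadd hmul in
lemma isUnit_iota_of_leading (p : AddMonoidAlgebra ℤ Γ) (γ₀ : Γ)
    (hle : ∀ γ ∈ p.coeff.support, (γ : ℝ) ≤ (γ₀ : ℝ)) (hc : p.coeff γ₀ = 1) : IsUnit (ι p) := by
  classical
  set u : AddMonoidAlgebra ℤ Γ := 1 - AddMonoidAlgebra.single (-γ₀) 1 * p with hu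
  have hval : ∀ γ : Γ, (AddMonoidAlgebra.single (-γ₀) (1 : ℤ) * p).coeff γ = p.coeff (γ₀ + γ) := by
    intro γ
    rw [AddMonoidAlgebra.coeff_single_mul_apply, neg_neg, one_mul]
  have husup : ∀ γ ∈ u.coeff.support, (γ : ℝ) < 0 := by
    intro γ hγ
    have hne := Finsupp.mem_support_iff.1 hγ
    have huγ : u.coeff γ = (if γ = 0 then 1 else 0) - p.coeff (γ₀ + γ) := by
      rw [hu, AddMonoidAlgebra.coeff_sub, Finsupp.sub_apply, hval]
      congr 1
      rw [AddMonoidAlgebra.one_def, AddMonoidAlgebra.coeff_single, Finsupp.single_apply]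
      simp [eq_comm]
    by_cases h0 : γ = 0
    · exfalso
      apply hne
      rw [huγ, if_pos h0, h0, add_zero, hc]
      ring
    · have hp : p.coeff (γ₀ + γ) ≠ 0 := by
        intro hz
        apply hne
        rw [huγ, if_neg h0, hz, sub_zero]
      have h1 := hle _ (Finsupp.mem_support_iff.2 hp)
      have hcoe : ((γ₀ + γ : Γ) : ℝ) = (γ₀ : ℝ) + (γ : ℝ) := by push_cast; ring
      have hγle : (γ : ℝ) ≤ 0 := by rw [hcoe] at h1; linarith
      have hγne : (γ : ℝ) ≠ 0 := by
        intro hz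
        exact h0 (Subtype.coe_injective (by simp only []; rw [hz]; simp))
      exact lt_of_le_of_ne hγle hγne
  have h1 : IsUnit ((1 : Nov Γ) - ι u) := isUnit_one_sub_iota ι hι hadd hmul u husup
  have h2 : (1 : Nov Γ) - ι u = ι (AddMonoidAlgebra.single (-γ₀) 1 * p) := by
    rw [hu, map_sub, map_one]
    ring
  rw [h2] at h1
  have h3 : IsUnit (ι (AddMonoidAlgebra.single γ₀ (1 : ℤ))) := by
    apply IsUnit.of_mul_eq_one (ι (AddMonoidAlgebra.single (-γ₀) 1))
    rw [← map_mul, AddMonoidAlgebra.single_mul_single, add_neg_cancel, one_mul,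
      ← AddMonoidAlgebra.one_def, map_one]
  have h4 : ι p = ι (AddMonoidAlgebra.single γ₀ (1 : ℤ)) * ι (AddMonoidAlgebra.single (-γ₀) 1 * p) := by
    rw [← map_mul, ← mul_assoc, AddMonoidAlgebra.single_mul_single, add_neg_cancel, one_mul,
      ← AddMonoidAlgebra.one_def, one_mul]
  rw [h4]
  exact h3.mul h1

include hι in
lemma iota_inj : Function.Injective ι := by
  intro x y h
  ext γ
  rw [← hι x γ, ← hι y γ, h]

end aux



/-- Let `Γ ⊆ ℝ` be an additive subgroup, and regard the group ring `ℤ[Γ]` as a subring of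
the Novikov ring `Nov(Γ)` (via a coefficient-preserving ring embedding `ι`).  Let `S` be the
multiplicative set of elements of `ℤ[Γ]` whose term of maximal exponent has coefficient `1`.
Then every element of `S` becomes invertible in `Nov(Γ)`, and the localization `S⁻¹ℤ[Γ]`
embeds as a subring of `Nov(Γ)`. -/
theorem leading_coeff_one_invertible_in_novikov (Γ : AddSubgroup ℝ)
    [inst : CommRing (Nov Γ)]
    (hadd : ∀ x y : Nov Γ, (x + y).val = fun γ => x.val γ + y.val γ)
    (hmul : ∀ x y : Nov Γ, ∀ γ : Γ,
      (x * y).val γ = ∑ᶠ p : Γ × Γ, if p.1 + p.2 = γ then x.val p.1 * y.val p.2 else 0)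
    (ι : AddMonoidAlgebra ℤ Γ →+* Nov Γ)
    (hι : ∀ (p : AddMonoidAlgebra ℤ Γ) (γ : Γ), (ι p).val γ = p.coeff γ) :
    ∃ S : Submonoid (AddMonoidAlgebra ℤ Γ),
      (S : Set (AddMonoidAlgebra ℤ Γ)) =
        {p | p ≠ 0 ∧ ∃ γ₀ : Γ, γ₀ ∈ p.coeff.support ∧
          (∀ γ : Γ, γ ∈ p.coeff.support → (γ : ℝ) ≤ (γ₀ : ℝ)) ∧ p.coeff γ₀ = 1} ∧
      (∀ p ∈ S, IsUnit (ι p)) ∧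
      ∃ g : Localization S →+* Nov Γ, Function.Injective g ∧
        ∀ p : AddMonoidAlgebra ℤ Γ, g (algebraMap (AddMonoidAlgebra ℤ Γ) (Localization S) p) = ι p := by
  classical
  set Sset : Set (AddMonoidAlgebra ℤ Γ) :=
    {p | p ≠ 0 ∧ ∃ γ₀ : Γ, γ₀ ∈ p.coeff.support ∧
      (∀ γ : Γ, γ ∈ p.coeff.support → (γ : ℝ) ≤ (γ₀ : ℝ)) ∧ p.coeff γ₀ = 1} with hSset
  have hone : (1 : AddMonoidAlgebra ℤ Γ) ∈ Sset := by
    refine ⟨one_ne_zero, 0, ?_, ?_, ?_⟩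
    · rw [Finsupp.mem_support_iff, AddMonoidAlgebra.one_def, AddMonoidAlgebra.coeff_single, Finsupp.single_eq_same]
      exact one_ne_zero
    · intro γ hγ
      rw [AddMonoidAlgebra.one_def, AddMonoidAlgebra.coeff_single, Finsupp.support_single_ne_zero _ one_ne_zero] at hγ
      rw [Finset.mem_singleton.1 hγ]
    · rw [AddMonoidAlgebra.one_def, AddMonoidAlgebra.coeff_single, Finsupp.single_eq_same]
  have hmulmem : ∀ {a b : AddMonoidAlgebra ℤ Γ}, a ∈ Sset → b ∈ Sset → a * b ∈ Sset := by
    rintro a b ⟨ha0, γ₀, hγ₀, hale, hac⟩ ⟨hb0, δ₀, hδ₀, hble, hbc⟩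
    have hcoeff : (a * b).coeff (γ₀ + δ₀) = 1 := by
      rw [coeff_mul, Finset.sum_eq_single γ₀]
      · rw [hac, one_mul, add_sub_cancel_left, hbc]
      · intro c hc hnec
        by_cases hz : b.coeff (γ₀ + δ₀ - c) = 0
        · rw [hz, mul_zero]
        · exfalso
          have h1 := hble _ (Finsupp.mem_support_iff.2 hz)
          have h2 := hale c hc
          have h3 : ((γ₀ + δ₀ - c : Γ) : ℝ) = (γ₀ : ℝ) + (δ₀ : ℝ) - (c : ℝ) := by
            push_cast; ring
          rw [h3] at h1
          exact hnec (Subtype.coe_injective (by linarith))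
      · intro h
        exact (h hγ₀).elim
    have hmem : γ₀ + δ₀ ∈ (a * b).coeff.support :=
      Finsupp.mem_support_iff.2 (by rw [hcoeff]; exact one_ne_zero)
    refine ⟨?_, γ₀ + δ₀, hmem, ?_, hcoeff⟩
    · intro h0
      rw [h0] at hcoeff
      simp at hcoeff
    · intro γ hγ
      have hsub := AddMonoidAlgebra.support_coeff_mul_subset a b hγ
      rw [Finset.mem_add] at hsub
      obtain ⟨i, hi, j, hj, hij⟩ := hsub
      have h1 := hale i hi
      have h2 := hble j hj
      have h3 : (γ : ℝ) = (i : ℝ) + (j : ℝ) := by rw [← hij]; push_cast; ring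
      have h4 : ((γ₀ + δ₀ : Γ) : ℝ) = (γ₀ : ℝ) + (δ₀ : ℝ) := by push_cast; ring
      rw [h3, h4]
      linarith
  set S : Submonoid (AddMonoidAlgebra ℤ Γ) :=
    { carrier := Sset
      mul_mem' := hmulmem
      one_mem' := hone } with hS
  have hunits : ∀ p ∈ S, IsUnit (ι p) := by
    rintro p ⟨hp0, γ₀, hγ₀, hple, hpc⟩
    exact isUnit_iota_of_leading ι hι hadd hmul p γ₀ hple hpc
  have hU : ∀ s : S, IsUnit (ι s) := fun s => hunits s s.2
  refine ⟨S, rfl, hunits, IsLocalization.lift hU, ?_, fun p => IsLocalization.lift_eq hU p⟩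
  rw [IsLocalization.lift_injective_iff]
  intro x y
  constructor
  · intro h
    obtain ⟨c, hc⟩ := (IsLocalization.eq_iff_exists S (Localization S)).1 h
    have h2 := congrArg ι hc
    rw [map_mul, map_mul] at h2
    exact (hU c).mul_left_cancel h2
  · intro h
    rw [iota_inj ι hι h]
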